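/- For the joint density f(x,y) = 2·φ(x)·φ(y)·Φ(λxy) on ℝ², the marginal density of the first coordinate is the standard normal density: ∫_ℝ 2·φ(x)·φ(y)·Φ(λxy) dy = φ(x) for every x ∈ ℝ and every λ ∈ ℝ. -/

import Mathlib

open Real MeasureTheory

/-- Standard normal pdf. -/
noncomputable def phi (x : ℝ) : ℝ := (Real.sqrt (2 * Real.pi))⁻¹ * Real.exp (-x ^ 2 / 2)

/-- Standard normal cdf. -/
noncomputable def Phi (x : ℝ) : ℝ := ∫ t in Set.Iic x, phi t

lemma phi_nonneg (x : ℝ) : 0 ≤ phi x :=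
  mul_nonneg (inv_nonneg.2 (Real.sqrt_nonneg _)) (Real.exp_nonneg _)

lemma phi_neg (x : ℝ) : phi (-x) = phi x := by simp [phi]

lemma phi_integrable : Integrable phi := by
  have h : phi = fun x => (Real.sqrt (2 * Real.pi))⁻¹ * Real.exp (-(1/2 : ℝ) * x ^ 2) := by
    funext x; rw [phi]; congr 1; ring_nf
  rw [h]
  exact (integrable_exp_neg_mul_sq (by norm_num)).const_mul _

lemma integral_phi : ∫ x, phi x = 1 := by
  have h : ∀ x : ℝ, phi x = (Real.sqrt (2 * Real.pi))⁻¹ * Real.exp (-(1/2 : ℝ) * x ^ 2) := by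
    intro x; rw [phi]; congr 1; ring_nf
  simp_rw [h]
  rw [integral_const_mul, integral_gaussian]
  have : Real.pi / (1/2 : ℝ) = 2 * Real.pi := by ring
  rw [this, inv_mul_cancel₀]
  positivity

lemma Phi_mono : Monotone Phi := by
  intro a b hab
  exact setIntegral_mono_set phi_integrable.integrableOn
    (Filter.Eventually.of_forall phi_nonneg)
    (HasSubset.Subset.eventuallyLE (Set.Iic_subset_Iic.2 hab))

lemma Phi_nonneg (a : ℝ) : 0 ≤ Phi a :=
  setIntegral_nonneg measurableSet_Iic (fun x _ => phi_nonneg x)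

lemma Phi_le_one (a : ℝ) : Phi a ≤ 1 := by
  rw [← integral_phi]
  exact setIntegral_le_integral phi_integrable (Filter.Eventually.of_forall phi_nonneg)

lemma Phi_add_neg (a : ℝ) : Phi a + Phi (-a) = 1 := by
  have h1 : Phi a = ∫ t in Set.Ioi (-a), phi t := by
    rw [Phi, ← integral_comp_neg_Iic]
    simp_rw [phi_neg]
  rw [add_comm, Phi, h1, intervalIntegral.integral_Iic_add_Ioi phi_integrable.integrableOn
    phi_integrable.integrableOn, integral_phi]

theorem skew_bivariate_normal_marginal (l x : ℝ) :
    ∫ y : ℝ, 2 * phi x * phi y * Phi (l * x * y) = phi x := by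
  have hPm : Measurable Phi := Phi_mono.measurable
  have hint : ∀ c : ℝ, Integrable (fun y => Phi (c * y) * phi y) := by
    intro c
    refine phi_integrable.bdd_mul (c := 1) ?_ (Filter.Eventually.of_forall fun y => ?_)
    · exact (hPm.comp (measurable_const_mul c)).aestronglyMeasurable
    · rw [Real.norm_eq_abs, abs_of_nonneg (Phi_nonneg _)]
      exact Phi_le_one _
  have hneg : ∫ y, Phi (-(l * x * y)) * phi y = ∫ y, Phi (l * x * y) * phi y := by
    rw [← integral_neg_eq_self (fun y => Phi (l * x * y) * phi y)]
    congr 1; funext y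
    rw [phi_neg, mul_neg]
  have key : ∫ y, Phi (l * x * y) * phi y = 1 / 2 := by
    have h2 : (∫ y, Phi (l * x * y) * phi y) + ∫ y, Phi (-(l * x * y)) * phi y = 1 := by
      rw [← integral_add (hint (l * x)) (by simpa [mul_neg] using hint (-(l * x)))]
      simp_rw [← add_mul]
      have : ∀ y : ℝ, (Phi (l * x * y) + Phi (-(l * x * y))) * phi y = phi y := by
        intro y; rw [Phi_add_neg, one_mul]
      simp_rw [this, integral_phi]
    rw [hneg] at h2
    linarith
  have hcongr : ∀ y : ℝ, 2 * phi x * phi y * Phi (l * x * y) =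
      (2 * phi x) * (Phi (l * x * y) * phi y) := by intro y; ring
  simp_rw [hcongr]
  rw [integral_const_mul, key]
  ring
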